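/- For any monic polynomial p(x) of positive degree k with integer coefficients and complex roots r_1, ..., r_k summing to ℓ, equality (1/k) ∑ |r_i - ℓ/k|² = (ℓ/k - ⌊ℓ/k⌋)(⌈ℓ/k⌉ - ℓ/k) holds if and only if every root equals ⌊ℓ/k⌋ or ⌊ℓ/k⌋ + 1. -/

import Mathlib

open Polynomial

lemma aux_eval_prod (s : Multiset ℂ) (c : ℂ) :
    eval c (Multiset.map (fun u => X - C u) s).prod = (Multiset.map (fun u => c - u) s).prod := by
  rw [show eval c (Multiset.map (fun u => X - C u) s).prod
      = ((Multiset.map (fun u => X - C u) s).map (eval c)).prod from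
    (Polynomial.evalRingHom c).map_multiset_prod _, Multiset.map_map]
  simp [Function.comp]

lemma aux_prod_le_exp (f g : ℂ → ℝ) (h0 : ∀ u, 0 ≤ f u) (hfg : ∀ u, f u ≤ g u)
    (s : Multiset ℂ) :
    (s.map f).prod ≤ Real.exp ((s.map g).sum - s.card) := by
  induction s using Multiset.induction_on with
  | empty => simp
  | cons a s ih =>
    simp only [Multiset.map_cons, Multiset.prod_cons, Multiset.sum_cons, Multiset.card_cons]
    have h1 : f a ≤ Real.exp (g a - 1) :=
      le_trans (hfg a) (by linarith [Real.add_one_le_exp (g a - 1)])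
    have h2 : (0:ℝ) ≤ (s.map f).prod := by
      apply Multiset.prod_nonneg
      intro x hx
      obtain ⟨u, _, rfl⟩ := Multiset.mem_map.mp hx
      exact h0 u
    calc f a * (s.map f).prod ≤ Real.exp (g a - 1) * Real.exp ((s.map g).sum - s.card) :=
        mul_le_mul h1 ih h2 (Real.exp_nonneg _)
      _ = Real.exp (g a + (s.map g).sum - ((s.card : ℝ) + 1)) := by
          rw [← Real.exp_add]; ring_nf
      _ = _ := by push_cast; ring_nf

lemma aux_key : ∀ (n : ℕ) (s : Multiset ℂ) (q : ℤ[X]), s.card = n →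
    q.map (Int.castRingHom ℂ) = (s.map fun u => X - C u).prod →
    ((s.map fun u => ‖u - 1/2‖ ^ 2).sum = (n : ℝ) / 4) →
    ∀ u ∈ s, u = 0 ∨ u = 1 := by
  intro n
  induction n with
  | zero =>
    intro s q hc _ _ u hu
    rw [Multiset.card_eq_zero] at hc
    simp [hc] at hu
  | succ n ih =>
    intro s q hc hq hsum u hu
    -- step 1: the integer q(0)q(1) has absolute value < 1, hence is 0
    have hev : ∀ a : ℤ, ((q.eval a : ℤ) : ℂ) = (s.map fun u => (a:ℂ) - u).prod := by
      intro a
      rw [← aux_eval_prod, ← hq]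
      simp [Polynomial.eval_map, Polynomial.eval₂_at_intCast]
    have habs : ‖((q.eval 0 * q.eval 1 : ℤ) : ℂ)‖
        = (s.map fun u => ‖((0:ℂ) - u) * ((1:ℂ) - u)‖).prod := by
      push_cast
      rw [norm_mul, hev 0, hev 1]
      rw [show ∀ t : Multiset ℂ, ‖t.prod‖ = (t.map norm).prod from
          fun t => map_multiset_prod (normHom : ℂ →*₀ ℝ) t, show ∀ t : Multiset ℂ, ‖t.prod‖ = (t.map norm).prod from
          fun t => map_multiset_prod (normHom : ℂ →*₀ ℝ) t, Multiset.map_map, Multiset.map_map,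
        ← Multiset.prod_map_mul]
      congr 1
      apply Multiset.map_congr rfl
      intro x _
      simp [map_mul]
    have hbound : (s.map fun u => ‖((0:ℂ) - u) * ((1:ℂ) - u)‖).prod
        ≤ Real.exp (-(((n:ℝ)+1))/2) := by
      have hle := aux_prod_le_exp (fun u => ‖((0:ℂ) - u) * ((1:ℂ) - u)‖)
        (fun u => ‖u - 1/2‖ ^ 2 + 1/4)
        (fun u => by positivity)
        (fun u => by
          have h1 : ((0:ℂ) - u) * ((1:ℂ) - u) = (u - 1/2)^2 - 1/4 := by ring
          rw [h1]
          calc ‖(u - 1/2)^2 - (1/4 : ℂ)‖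
              ≤ ‖(u-1/2)^2‖ + ‖(1/4 : ℂ)‖ := by
                exact (norm_sub_le _ _)
            _ = ‖u - 1/2‖^2 + 1/4 := by
                rw [norm_pow]; norm_num) s
      have hsum2 : (s.map fun u => ‖u - 1/2‖ ^ 2 + 1/4).sum
          = ((n:ℝ)+1)/2 := by
        rw [Multiset.sum_map_add, hsum, Multiset.map_const', Multiset.sum_replicate, hc]
        push_cast
        ring
      rw [hsum2, hc] at hle
      calc _ ≤ _ := hle
        _ = Real.exp (-(((n:ℝ)+1))/2) := by norm_num; ring_nf
    have hz : q.eval 0 * q.eval 1 = 0 := by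
      have h1 : ‖((q.eval 0 * q.eval 1 : ℤ) : ℂ)‖ < 1 := by
        rw [habs]
        calc _ ≤ Real.exp (-(((n:ℝ)+1))/2) := hbound
          _ < 1 := by
            rw [Real.exp_lt_one_iff]
            have : (0:ℝ) ≤ n := Nat.cast_nonneg n
            linarith
      rw [Complex.norm_intCast] at h1
      exact Int.abs_lt_one_iff.mp (by exact_mod_cast h1)
    -- step 2: an integer root c' ∈ {0,1}
    obtain ⟨c', hc01, hqc⟩ : ∃ c' : ℤ, (c' = 0 ∨ c' = 1) ∧ q.eval c' = 0 := by
      rcases mul_eq_zero.mp hz with h | h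
      · exact ⟨0, Or.inl rfl, h⟩
      · exact ⟨1, Or.inr rfl, h⟩
    set c : ℂ := (c' : ℂ) with hcdef
    have hmem : c ∈ s := by
      have h1 : (s.map fun u => c - u).prod = 0 := by rw [← hev c', hqc]; simp
      rw [Multiset.prod_eq_zero_iff] at h1
      obtain ⟨v, hv, hv0⟩ := Multiset.mem_map.mp h1
      rw [sub_eq_zero] at hv0
      rwa [hv0]
    have hcons : s = c ::ₘ s.erase c := (Multiset.cons_erase hmem).symm
    set q₂ : ℤ[X] := q /ₘ (X - Polynomial.C c') with hq₂
    have hfac : (X - Polynomial.C c') * q₂ = q := Polynomial.mul_divByMonic_eq_iff_isRoot.mpr hqc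
    have hmap2 : q₂.map (Int.castRingHom ℂ) = ((s.erase c).map fun u => X - C u).prod := by
      have h2 : (X - C c) * (q₂.map (Int.castRingHom ℂ))
          = (X - C c) * ((s.erase c).map fun u => X - C u).prod := by
        calc (X - C c) * (q₂.map (Int.castRingHom ℂ))
            = ((X - Polynomial.C c') * q₂).map (Int.castRingHom ℂ) := by
              rw [Polynomial.map_mul]; simp [hcdef]
          _ = q.map (Int.castRingHom ℂ) := by rw [hfac]
          _ = _ := by rw [hq, hcons]; simp [Multiset.map_cons, Multiset.prod_cons]
      exact mul_left_cancel₀ (Polynomial.X_sub_C_ne_zero c) h2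
    have hcard2 : (s.erase c).card = n := by
      have h3 := congrArg Multiset.card hcons
      simp only [Multiset.card_cons, hc] at h3
      omega
    have habs14 : ‖c - 1/2‖ ^ 2 = 1/4 := by
      rcases hc01 with h | h <;> rw [hcdef, h] <;>
        rw [Complex.sq_norm] <;>
        simp [Complex.normSq_apply, Complex.sub_re, Complex.sub_im] <;> norm_num
    have hsum2 : ((s.erase c).map fun u => ‖u - 1/2‖ ^ 2).sum = (n:ℝ)/4 := by
      have h4 := hsum
      rw [hcons, Multiset.map_cons, Multiset.sum_cons, habs14] at h4
      push_cast at h4 ⊢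
      linarith
    have hall := ih (s.erase c) q₂ hcard2 hmap2 hsum2
    rw [hcons] at hu
    rcases Multiset.mem_cons.mp hu with h | h
    · rw [h, hcdef]; rcases hc01 with h' | h' <;> rw [h'] <;> simp
    · exact hall u h


/-- Equality in the root-spread bound holds iff every root equals
`⌊ℓ/k⌋` or `⌊ℓ/k⌋ + 1`. -/
theorem stmt1 (k : ℕ) (hk : 1 ≤ k) (r : Fin k → ℂ)
    (hint : ∀ i : ℕ, ∃ z : ℤ, (∏ j, (X - C (r j))).coeff i = (z : ℂ))
    (ℓ : ℤ) (hsum : ∑ i, r i = (ℓ : ℂ)) :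
    (1 / (k : ℝ)) * ∑ i, ‖r i - (((ℓ : ℝ) / k : ℝ) : ℂ)‖ ^ 2 =
      ((ℓ : ℝ) / k - ⌊(ℓ : ℝ) / k⌋) * (⌈(ℓ : ℝ) / k⌉ - (ℓ : ℝ) / k) ↔
    ∀ i, r i = ((⌊(ℓ : ℝ) / k⌋ : ℤ) : ℂ) ∨ r i = ((⌊(ℓ : ℝ) / k⌋ : ℤ) : ℂ) + 1 := by
  have hk0 : (0:ℝ) < (k:ℝ) := by exact_mod_cast Nat.pos_of_ne_zero (by omega)
  set μ : ℝ := (ℓ:ℝ)/k with hμdef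
  set m : ℤ := ⌊μ⌋ with hm
  have hfl : (m:ℝ) ≤ μ := Int.floor_le μ
  have hfu : μ < (m:ℝ) + 1 := Int.lt_floor_add_one μ
  have hμk : (k:ℝ) * μ = (ℓ:ℝ) := by rw [hμdef]; field_simp
  have hre : ∑ i, (r i).re = (ℓ:ℝ) := by
    have h := congrArg Complex.re hsum
    rw [Complex.re_sum] at h
    simpa using h
  have hexp : ∀ c : ℝ, ∑ i, ‖r i - (c:ℂ)‖ ^ 2
      = (∑ i, ((r i).re^2 + (r i).im^2)) - 2*c*(∑ i, (r i).re) + k * c^2 := by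
    intro c
    have h1 : ∀ i : Fin k, ‖r i - (c:ℂ)‖ ^ 2
        = (((r i).re^2 + (r i).im^2) - 2*c*(r i).re + c^2) := by
      intro i
      rw [Complex.sq_norm, Complex.normSq_apply]
      simp only [Complex.sub_re, Complex.sub_im, Complex.ofReal_re, Complex.ofReal_im]
      ring
    rw [Finset.sum_congr rfl (fun i _ => h1 i)]
    rw [Finset.sum_add_distrib, Finset.sum_sub_distrib, ← Finset.mul_sum, Finset.sum_const]
    simp only [Finset.card_univ, Fintype.card_fin, nsmul_eq_mul]
  have hRHS : (μ - (m:ℝ)) * ((⌈μ⌉:ℝ) - μ) = (μ - m)*(1 - (μ - m)) := by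
    by_cases hf : μ - (m:ℝ) = 0
    · rw [hf]; ring_nf
    · have hceil : (⌈μ⌉ : ℤ) = m + 1 := by
        rw [Int.ceil_eq_iff]
        constructor
        · push_cast
          rcases lt_or_eq_of_le hfl with h | h
          · linarith
          · exact absurd h.symm (fun hh => hf (by linarith))
        · push_cast; linarith
      rw [hceil]; push_cast; ring
  have hS : ((1 / (k:ℝ)) * ∑ i, ‖r i - (μ:ℂ)‖ ^ 2 = (μ - (m:ℝ)) * ((⌈μ⌉:ℝ) - μ))
      ↔ (∑ i, ‖r i - (((m:ℝ) + 1/2 : ℝ):ℂ)‖ ^ 2 = (k:ℝ)/4) := by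
    rw [hRHS, hexp μ, hexp ((m:ℝ)+1/2), hre]
    rw [one_div, inv_mul_eq_div, div_eq_iff (ne_of_gt hk0)]
    constructor <;> intro h
    · linear_combination h + (2*(m:ℝ) + 1 - 2*μ) * hμk
    · linear_combination h - (2*(m:ℝ) + 1 - 2*μ) * hμk
  rw [hS]
  constructor
  · intro hs
    have hl : (∏ j, (X - C (r j))) ∈ Polynomial.lifts (Int.castRingHom ℂ) := by
      rw [Polynomial.lifts_iff_coeff_lifts]
      intro n
      obtain ⟨z, hz⟩ := hint n
      exact ⟨z, by simp [hz]⟩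
    obtain ⟨q₀, hq₀⟩ := (Polynomial.mem_lifts _).mp hl
    set s : Multiset ℂ := Finset.univ.val.map (fun j => r j - ((m:ℤ):ℂ)) with hs_def
    have hcard : s.card = k := by simp [hs_def]
    have hcomp : (∏ j, (X - C (r j))).comp (X + Polynomial.C ((m:ℤ):ℂ))
        = ∏ j, (X - C (r j - ((m:ℤ):ℂ))) := by
      simp only [Polynomial.comp, Polynomial.eval₂_finset_prod]
      apply Finset.prod_congr rfl
      intro j _
      simp only [Polynomial.eval₂_sub, Polynomial.eval₂_X, Polynomial.eval₂_C, Polynomial.C_sub]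
      ring_nf
    have hqmap : (q₀.comp (X + Polynomial.C m)).map (Int.castRingHom ℂ)
        = (s.map fun u => X - C u).prod := by
      rw [Polynomial.map_comp, hq₀]
      simp only [Polynomial.map_add, Polynomial.map_X, Polynomial.map_C]
      rw [show (Int.castRingHom ℂ) m = ((m:ℤ):ℂ) from rfl, hcomp]
      rw [hs_def, Multiset.map_map, Finset.prod_eq_multiset_prod]
      rfl
    have hsum' : (s.map fun u => ‖u - 1/2‖ ^ 2).sum = ((k:ℕ):ℝ)/4 := by
      rw [hs_def, Multiset.map_map]
      rw [show ((Finset.univ.val.map ((fun u => ‖u - 1/2‖ ^ 2) ∘ (fun j => r j - ((m:ℤ):ℂ)))).sum)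
          = ∑ j, ‖(r j - ((m:ℤ):ℂ)) - 1/2‖ ^ 2 from rfl]
      rw [← hs]
      apply Finset.sum_congr rfl
      intro j _
      congr 1
      push_cast
      ring
    have hall := aux_key k s (q₀.comp (X + Polynomial.C m)) hcard hqmap hsum'
    intro i
    have hmem : r i - ((m:ℤ):ℂ) ∈ s := by
      rw [hs_def]
      exact Multiset.mem_map.mpr ⟨i, by simp, rfl⟩
    rcases hall _ hmem with h | h
    · left; linear_combination h
    · right; linear_combination h
  · intro hall
    have hpt : ∀ i : Fin k, ‖r i - (((m:ℝ) + 1/2 : ℝ):ℂ)‖ ^ 2 = 1/4 := by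
      intro i
      rcases hall i with h | h <;> rw [h, Complex.sq_norm] <;>
        simp [Complex.normSq_apply, Complex.sub_re, Complex.sub_im] <;> norm_num
    rw [Finset.sum_congr rfl (fun i _ => hpt i), Finset.sum_const]
    simp only [Finset.card_univ, Fintype.card_fin, nsmul_eq_mul]
    ring
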